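/- arXiv:2011.02330 — 2 statements merged into one kernel-verified Lean document; each statement's English description precedes it below -/
import Mathlib

section
/- Let A* be a random vector in {0,1}^d with ‖A*‖_1 = m almost surely (1 ≤ m ≤ d), and let F_1, …, F_T be a filtration of observations. Then ∑_{t=1}^T ∑_{j=1}^d I_t(A*_j; O_t) ≤ ∑_{j=1}^d H(q_j) where q_j = P(A*_j = 1), I_t denotes mutual information under the posterior at time t, O_t is the observation at time t, and H is binary entropy; consequently this sum is at most m·(log(d/m) + 1). -/
attribute [local instance] Classical.propDecidable

/-- Probability of an event on a finite sample space with weight function `μ`. -/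
noncomputable def pr {Ω : Type*} [Fintype Ω] (μ : Ω → ℝ) (E : Ω → Prop) : ℝ :=
  ∑ ω, if E ω then μ ω else 0

/-- Shannon mutual information (natural logarithm) between the discrete random
variables `X` and `Y` on a finite sample space, with the convention `0 · log 0 = 0`. -/
noncomputable def mutInfo {Ω S T : Type*} [Fintype Ω]
    (μ : Ω → ℝ) (X : Ω → S) (Y : Ω → T) : ℝ :=
  ∑ x ∈ Finset.univ.image X, ∑ y ∈ Finset.univ.image Y,
    pr μ (fun ω => X ω = x ∧ Y ω = y) *
      Real.log (pr μ (fun ω => X ω = x ∧ Y ω = y) /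
        (pr μ (fun ω => X ω = x) * pr μ (fun ω => Y ω = y)))


/-- Conditional mutual information `I(X; Y | F)`. -/
noncomputable def condMutInfo {Ω S T U : Type*} [Fintype Ω]
    (μ : Ω → ℝ) (X : Ω → S) (Y : Ω → T) (F : Ω → U) : ℝ :=
  ∑ f ∈ Finset.univ.image F,
    pr μ (fun ω => F ω = f) *
      mutInfo (fun ω => if F ω = f then μ ω / pr μ (fun ω' => F ω' = f) else 0) X Y

/-- Binary entropy function (natural logarithm). -/
noncomputable def binEnt (p : ℝ) : ℝ :=
  -(p * Real.log p) - (1 - p) * Real.log (1 - p)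

/-- The history of observations before time `t`. -/
noncomputable def hist {Ω S : Type*} {T : ℕ} (O : Fin T → Ω → S) (t : Fin T) (ω : Ω) :
    Fin T → Option S :=
  fun s => if (s : ℕ) < (t : ℕ) then some (O s ω) else none


section Basic
variable {Ω : Type*} [Fintype Ω] {μ : Ω → ℝ}

lemma pr_congr {E E' : Ω → Prop} (h : ∀ ω, E ω ↔ E' ω) : pr μ E = pr μ E' := by
  unfold pr; exact Finset.sum_congr rfl fun ω _ => by rw [if_congr (h ω) rfl rfl]

lemma pr_nonneg (hμ : ∀ ω, 0 ≤ μ ω) (E : Ω → Prop) : 0 ≤ pr μ E :=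
  Finset.sum_nonneg fun ω _ => by split <;> simp [hμ ω]

lemma pr_mono (hμ : ∀ ω, 0 ≤ μ ω) {E E' : Ω → Prop} (h : ∀ ω, E ω → E' ω) :
    pr μ E ≤ pr μ E' := by
  apply Finset.sum_le_sum; intro ω _
  by_cases hE : E ω
  · rw [if_pos hE, if_pos (h ω hE)]
  · rw [if_neg hE]; split <;> simp [hμ ω]

lemma pr_le_total (hμ : ∀ ω, 0 ≤ μ ω) (E : Ω → Prop) : pr μ E ≤ ∑ ω, μ ω := by
  apply Finset.sum_le_sum; intro ω _; split <;> simp [hμ ω]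

lemma pr_eq_zero_iff (hμ : ∀ ω, 0 ≤ μ ω) {E : Ω → Prop} :
    pr μ E = 0 ↔ ∀ ω, E ω → μ ω = 0 := by
  constructor
  · intro h ω hE
    have := (Finset.sum_eq_zero_iff_of_nonneg (fun ω _ => by split <;> simp [hμ ω])).1 h ω
      (Finset.mem_univ ω)
    simpa [hE] using this
  · intro h; apply Finset.sum_eq_zero; intro ω _
    split
    · exact h ω ‹_›
    · rfl

lemma pr_false (h : ∀ ω, ¬ E ω) : pr μ E = 0 :=
  Finset.sum_eq_zero fun ω _ => if_neg (h ω)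

lemma pr_compl (hsum : ∑ ω, μ ω = 1) (E : Ω → Prop) :
    pr μ (fun ω => ¬ E ω) = 1 - pr μ E := by
  unfold pr
  rw [← hsum, eq_sub_iff_add_eq, ← Finset.sum_add_distrib]
  apply Finset.sum_congr rfl; intro ω _
  by_cases h : E ω <;> simp [h]

end Basic
section Ent
variable {Ω S U : Type*} [Fintype Ω]

/-- Shannon entropy. -/
noncomputable def ent (μ : Ω → ℝ) (X : Ω → S) : ℝ :=
  -∑ x ∈ Finset.univ.image X, pr μ (fun ω => X ω = x) * Real.log (pr μ (fun ω => X ω = x))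

/-- Conditional measure given `F = f`. -/
noncomputable def cnd (μ : Ω → ℝ) (F : Ω → U) (f : U) : Ω → ℝ :=
  fun ω => if F ω = f then μ ω / pr μ (fun ω' => F ω' = f) else 0

/-- Conditional entropy. -/
noncomputable def condEnt (μ : Ω → ℝ) (X : Ω → S) (F : Ω → U) : ℝ :=
  ∑ f ∈ Finset.univ.image F, pr μ (fun ω => F ω = f) * ent (cnd μ F f) X

variable {μ : Ω → ℝ}

lemma cnd_apply (μ : Ω → ℝ) (F : Ω → U) (f : U) (ω : Ω) :
    cnd μ F f ω = if F ω = f then μ ω / pr μ (fun ω' => F ω' = f) else 0 := rfl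

lemma cnd_nonneg (hμ : ∀ ω, 0 ≤ μ ω) (F : Ω → U) (f : U) : ∀ ω, 0 ≤ cnd μ F f ω := by
  intro ω; unfold cnd; split
  · exact div_nonneg (hμ ω) (pr_nonneg hμ _)
  · exact le_refl 0

lemma cnd_total (hμ : ∀ ω, 0 ≤ μ ω) (F : Ω → U) (f : U) :
    ∑ ω, cnd μ F f ω ≤ 1 := by
  have key : ∑ ω, cnd μ F f ω
      = pr μ (fun ω' => F ω' = f) / pr μ (fun ω' => F ω' = f) := by
    unfold cnd pr
    rw [Finset.sum_div]
    exact Finset.sum_congr rfl fun ω _ => by split <;> simp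
  rw [key]
  by_cases h : pr μ (fun ω' => F ω' = f) = 0
  · simp [h]
  · rw [div_self h]

lemma ent_nonneg (hμ : ∀ ω, 0 ≤ μ ω) (htot : ∑ ω, μ ω ≤ 1) (X : Ω → S) :
    0 ≤ ent μ X := by
  unfold ent
  rw [neg_nonneg]
  apply Finset.sum_nonpos
  intro x _
  have h0 : 0 ≤ pr μ (fun ω => X ω = x) := pr_nonneg hμ _
  have h1 : pr μ (fun ω => X ω = x) ≤ 1 := le_trans (pr_le_total hμ _) htot
  exact mul_nonpos_of_nonneg_of_nonpos h0 (Real.log_nonpos h0 h1)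

lemma condEnt_nonneg (hμ : ∀ ω, 0 ≤ μ ω) (X : Ω → S) (F : Ω → U) :
    0 ≤ condEnt μ X F := by
  apply Finset.sum_nonneg; intro f _
  exact mul_nonneg (pr_nonneg hμ _) (ent_nonneg (cnd_nonneg hμ F f) (cnd_total hμ F f) X)

end Ent
section MutInfo
variable {Ω S U : Type*} [Fintype Ω] {μ : Ω → ℝ}

lemma pr_cnd (μ : Ω → ℝ) (F : Ω → U) (f : U) (E : Ω → Prop) :
    pr (cnd μ F f) E
      = pr μ (fun ω => E ω ∧ F ω = f) / pr μ (fun ω => F ω = f) := by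
  unfold pr cnd
  rw [Finset.sum_div]
  apply Finset.sum_congr rfl; intro ω _
  by_cases hE : E ω <;> by_cases hF : F ω = f <;> simp [pr, hE, hF]

lemma pr_marginal (μ : Ω → ℝ) (Y : Ω → U) (E : Ω → Prop) :
    ∑ y ∈ Finset.univ.image Y, pr μ (fun ω => E ω ∧ Y ω = y) = pr μ E := by
  unfold pr
  rw [Finset.sum_comm]
  apply Finset.sum_congr rfl; intro ω _
  rw [Finset.sum_eq_single_of_mem (Y ω) (Finset.mem_image_of_mem Y (Finset.mem_univ ω))]
  · simp
  · intro y _ hy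
    rw [if_neg (fun h => hy h.2.symm)]

lemma mul_div_cancel_of_le {a b : ℝ} (hb : b = 0 → a = 0) : b * (a / b) = a := by
  by_cases h : b = 0
  · simp [h, hb h]
  · rw [mul_div_cancel₀ _ h]

lemma mutInfo_eq_ent_sub_condEnt {S' T' : Type*} (μ : Ω → ℝ)
    (hμ : ∀ ω, 0 ≤ μ ω) (X : Ω → S') (Y : Ω → T') :
    mutInfo μ X Y = ent μ X - condEnt μ X Y := by
  have hle_py : ∀ (x : S') (y : T'),
      pr μ (fun ω => X ω = x ∧ Y ω = y) ≤ pr μ (fun ω => Y ω = y) :=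
    fun x y => pr_mono hμ fun ω h => h.2
  have hle_px : ∀ (x : S') (y : T'),
      pr μ (fun ω => X ω = x ∧ Y ω = y) ≤ pr μ (fun ω => X ω = x) :=
    fun x y => pr_mono hμ fun ω h => h.1
  have hnn : ∀ (x : S') (y : T'), 0 ≤ pr μ (fun ω => X ω = x ∧ Y ω = y) :=
    fun x y => pr_nonneg hμ _
  have hc : condEnt μ X Y = -∑ y ∈ Finset.univ.image Y, ∑ x ∈ Finset.univ.image X,
      pr μ (fun ω => X ω = x ∧ Y ω = y) *
        Real.log (pr μ (fun ω => X ω = x ∧ Y ω = y) / pr μ (fun ω => Y ω = y)) := by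
    unfold condEnt ent
    rw [← Finset.sum_neg_distrib]
    apply Finset.sum_congr rfl; intro y _
    rw [mul_neg, neg_inj, Finset.mul_sum]
    apply Finset.sum_congr rfl; intro x _
    rw [pr_cnd]
    rw [← mul_assoc, mul_div_cancel_of_le
      (fun h => le_antisymm (h ▸ hle_py x y) (hnn x y))]
  have he : ent μ X = -∑ y ∈ Finset.univ.image Y, ∑ x ∈ Finset.univ.image X,
      pr μ (fun ω => X ω = x ∧ Y ω = y) * Real.log (pr μ (fun ω => X ω = x)) := by
    unfold ent
    rw [Finset.sum_comm, neg_inj]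
    apply Finset.sum_congr rfl; intro x _
    rw [← pr_marginal μ Y (fun ω => X ω = x), Finset.sum_mul]
  rw [hc, he, neg_sub_neg, ← Finset.sum_sub_distrib]
  unfold mutInfo
  rw [Finset.sum_comm]
  apply Finset.sum_congr rfl; intro y _
  rw [← Finset.sum_sub_distrib]
  apply Finset.sum_congr rfl; intro x _
  rw [← mul_sub]
  by_cases h0 : pr μ (fun ω => X ω = x ∧ Y ω = y) = 0
  · simp [h0]
  · have hpy : pr μ (fun ω => Y ω = y) ≠ 0 :=
      fun h => h0 (le_antisymm (h ▸ hle_py x y) (hnn x y))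
    have hpx : pr μ (fun ω => X ω = x) ≠ 0 :=
      fun h => h0 (le_antisymm (h ▸ hle_px x y) (hnn x y))
    congr 1
    rw [mul_comm (pr μ fun ω => X ω = x), ← div_div,
      Real.log_div (div_ne_zero h0 hpy) hpx]

end MutInfo
section Chain
variable {Ω : Type*} [Fintype Ω]

lemma div_div_div_same {a b c : ℝ} (hc : c ≠ 0) : (a / c) / (b / c) = a / b := by
  by_cases hb : b = 0
  · simp [hb]
  · field_simp

lemma cnd_cnd {T' U' : Type*} (μ : Ω → ℝ)
    (F : Ω → U') (Y : Ω → T') (f : U') (y : T')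
    (hF : pr μ (fun ω => F ω = f) ≠ 0) :
    cnd (cnd μ F f) Y y = cnd μ (fun ω => (F ω, Y ω)) (f, y) := by
  funext ω
  have hpc : pr (cnd μ F f) (fun ω' => Y ω' = y)
      = pr μ (fun ω => Y ω = y ∧ F ω = f) / pr μ (fun ω => F ω = f) := pr_cnd μ F f _
  have hpair : pr μ (fun ω' => (F ω', Y ω') = (f, y))
      = pr μ (fun ω => Y ω = y ∧ F ω = f) :=
    pr_congr fun ω => by rw [Prod.mk.injEq]; tauto
  rw [cnd_apply, cnd_apply, cnd_apply, hpc, hpair]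
  by_cases hy : Y ω = y <;> by_cases hf : F ω = f
  · rw [if_pos hy, if_pos hf, if_pos (by rw [hf, hy]), div_div_div_same hF]
  · rw [if_pos hy, if_neg hf, if_neg (by simp [Prod.mk.injEq, hf]), zero_div]
  · rw [if_neg hy, if_neg (by simp [Prod.mk.injEq, hy])]
  · rw [if_neg hy, if_neg (by simp [Prod.mk.injEq, hy])]

lemma condEnt_superset {S' U' : Type*} (μ : Ω → ℝ) (X : Ω → S') (F : Ω → U')
    {s : Finset U'} (hs : ∀ ω, F ω ∈ s) :
    condEnt μ X F = ∑ f ∈ s, pr μ (fun ω => F ω = f) * ent (cnd μ F f) X := by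
  apply Finset.sum_subset
  · intro p hp
    obtain ⟨ω, -, rfl⟩ := Finset.mem_image.1 hp
    exact hs ω
  intro p _ hp
  rw [pr_false fun ω h => hp (Finset.mem_image.2 ⟨ω, Finset.mem_univ ω, h⟩), zero_mul]

lemma condMutInfo_eq {S' T' U' : Type*} (μ : Ω → ℝ) (hμ : ∀ ω, 0 ≤ μ ω)
    (X : Ω → S') (Y : Ω → T') (F : Ω → U') :
    condMutInfo μ X Y F
      = condEnt μ X F - condEnt μ X (fun ω => (F ω, Y ω)) := by
  have step1 : condMutInfo μ X Y F
      = condEnt μ X F - ∑ f ∈ Finset.univ.image F,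
          pr μ (fun ω => F ω = f) * condEnt (cnd μ F f) X Y := by
    unfold condMutInfo condEnt
    rw [← Finset.sum_sub_distrib]
    apply Finset.sum_congr rfl; intro f _
    rw [← mul_sub]
    congr 1
    exact mutInfo_eq_ent_sub_condEnt (cnd μ F f) (cnd_nonneg hμ F f) X Y
  rw [step1]
  congr 1
  rw [condEnt_superset μ X (fun ω => (F ω, Y ω))
    (s := (Finset.univ.image F) ×ˢ (Finset.univ.image Y))
    (fun ω => Finset.mem_product.2 ⟨Finset.mem_image_of_mem F (Finset.mem_univ ω),
      Finset.mem_image_of_mem Y (Finset.mem_univ ω)⟩)]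
  rw [Finset.sum_product]
  apply Finset.sum_congr rfl; intro f _
  rw [condEnt, Finset.mul_sum]
  apply Finset.sum_congr rfl; intro y _
  have hpair : pr μ (fun ω => (F ω, Y ω) = (f, y))
      = pr μ (fun ω => Y ω = y ∧ F ω = f) :=
    pr_congr fun ω => by rw [Prod.mk.injEq]; tauto
  by_cases hF : pr μ (fun ω => F ω = f) = 0
  · have h2 : pr μ (fun ω => Y ω = y ∧ F ω = f) = 0 :=
      le_antisymm (hF ▸ pr_mono hμ fun ω h => h.2) (pr_nonneg hμ _)
    rw [hF, hpair, h2, zero_mul, zero_mul]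
  · rw [cnd_cnd μ F Y f y hF, pr_cnd, ← mul_assoc,
      mul_div_cancel₀ _ hF, hpair]

end Chain
section Congr
variable {Ω : Type*} [Fintype Ω]

lemma mem_image_univ {α β : Type*} [Fintype α] (f : α → β) (a : α) :
    f a ∈ Finset.univ.image f := Finset.mem_image_of_mem f (Finset.mem_univ a)

lemma condEnt_congr {S' U' V' : Type*} (μ : Ω → ℝ) (X : Ω → S')
    (F : Ω → U') (G : Ω → V')
    (h : ∀ ω ω', F ω = F ω' ↔ G ω = G ω') :
    condEnt μ X F = condEnt μ X G := by
  unfold condEnt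
  apply Finset.sum_bij (i := fun f hf => G (Finset.mem_image.1 hf).choose)
  · intro f hf
    exact Finset.mem_image_of_mem G (Finset.mem_univ _)
  · intro f1 hf1 f2 hf2 heq
    have k1 := (Finset.mem_image.1 hf1).choose_spec.2
    have k2 := (Finset.mem_image.1 hf2).choose_spec.2
    rw [← k1, ← k2]
    exact (h _ _).2 heq
  · intro g hg
    obtain ⟨ω, -, rfl⟩ := Finset.mem_image.1 hg
    refine ⟨F ω, Finset.mem_image_of_mem F (Finset.mem_univ ω), ?_⟩
    exact (h _ _).1 (Finset.mem_image.1 (Finset.mem_image_of_mem F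
      (Finset.mem_univ ω))).choose_spec.2
  · intro f hf
    have key := (Finset.mem_image.1 hf).choose_spec.2
    set w := (Finset.mem_image.1 hf).choose
    have hiff : ∀ ω', F ω' = f ↔ G ω' = G w := by
      intro ω'; rw [← key]; exact h ω' w
    have hpr : pr μ (fun ω => F ω = f) = pr μ (fun ω => G ω = G w) :=
      pr_congr hiff
    have hcnd : cnd μ F f = cnd μ G (G w) := by
      funext ω
      rw [cnd_apply, cnd_apply, hpr]
      exact if_congr (hiff ω) rfl rfl
    rw [hpr, hcnd]

lemma condEnt_const {S' U' : Type*} (μ : Ω → ℝ) (hsum : ∑ ω, μ ω = 1)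
    (X : Ω → S') (F : Ω → U') (c : U') (hc : ∀ ω, F ω = c) :
    condEnt μ X F = ent μ X := by
  have hne : (Finset.univ : Finset Ω).Nonempty := by
    by_contra hemp
    rw [Finset.not_nonempty_iff_eq_empty.1 hemp] at hsum
    simp at hsum
  have himg : Finset.univ.image F = {c} := by
    rw [show F = fun _ => c from funext hc]
    exact Finset.image_const hne c
  have hprc : pr μ (fun ω => F ω = c) = 1 := by
    rw [← hsum]; unfold pr
    exact Finset.sum_congr rfl fun ω _ => if_pos (hc ω)
  have hcnd : cnd μ F c = μ := by
    funext ω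
    rw [cnd_apply, if_pos (hc ω), hprc, div_one]
  unfold condEnt
  rw [himg, Finset.sum_singleton, hprc, hcnd, one_mul]

lemma ent_bool (μ : Ω → ℝ) (hsum : ∑ ω, μ ω = 1) (X : Ω → Bool) :
    ent μ X = binEnt (pr μ (fun ω => X ω = true)) := by
  have hext : ent μ X = -∑ x : Bool,
      pr μ (fun ω => X ω = x) * Real.log (pr μ (fun ω => X ω = x)) := by
    unfold ent
    rw [neg_inj]
    apply Finset.sum_subset (Finset.subset_univ _)
    intro b _ hb
    rw [pr_false (E := fun ω => X ω = b) fun ω h => hb (h ▸ mem_image_univ X ω), zero_mul]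
  have hfalse : pr μ (fun ω => X ω = false) = 1 - pr μ (fun ω => X ω = true) := by
    rw [← pr_compl hsum]
    exact pr_congr fun ω => by simp
  rw [hext, Fintype.sum_bool, hfalse]
  unfold binEnt
  ring

end Congr

/-- `hist` with a natural-number cutoff. -/
noncomputable def histN {Ω S : Type*} {T : ℕ} (O : Fin T → Ω → S) (n : ℕ) (ω : Ω) :
    Fin T → Option S :=
  fun s => if (s : ℕ) < n then some (O s ω) else none

lemma histN_succ_iff {Ω S : Type*} {T : ℕ} (O : Fin T → Ω → S) (t : Fin T) (ω ω' : Ω) :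
    (histN O t ω, O t ω) = (histN O t ω', O t ω')
      ↔ histN O (t + 1) ω = histN O (t + 1) ω' := by
  constructor
  · intro h
    rw [Prod.mk.injEq] at h
    obtain ⟨h1, h2⟩ := h
    funext s
    unfold histN
    by_cases hs : (s : ℕ) < (t : ℕ) + 1
    · rw [if_pos hs, if_pos hs]
      by_cases hs' : (s : ℕ) < (t : ℕ)
      · have := congrFun h1 s
        unfold histN at this
        rwa [if_pos hs', if_pos hs'] at this
      · have hst : s = t := Fin.ext (Nat.le_antisymm (Nat.lt_succ_iff.1 hs)
          (Nat.le_of_not_lt hs'))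
        rw [hst, h2]
    · rw [if_neg hs, if_neg hs]
  · intro h
    have key : ∀ s : Fin T, (s : ℕ) < (t : ℕ) + 1 → O s ω = O s ω' := by
      intro s hs
      have := congrFun h s
      unfold histN at this
      rw [if_pos hs, if_pos hs] at this
      exact Option.some_injective _ this
    rw [Prod.mk.injEq]
    constructor
    · funext s
      unfold histN
      by_cases hs : (s : ℕ) < (t : ℕ)
      · rw [if_pos hs, if_pos hs, key s (Nat.lt_succ_of_lt hs)]
      · rw [if_neg hs, if_neg hs]
    · exact key t (Nat.lt_succ_self _)
lemma binEnt_le_add {q : ℝ} (h1 : q ≤ 1) : binEnt q ≤ -(q * Real.log q) + q := by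
  unfold binEnt
  rw [sub_eq_add_neg]
  apply add_le_add_right
  set r := 1 - q with hr
  have hr0 : 0 ≤ r := by linarith
  rcases eq_or_lt_of_le hr0 with h | h
  · rw [← h]; simp; linarith
  · have hlog := Real.log_le_sub_one_of_pos (inv_pos.2 h)
    have hmul := mul_le_mul_of_nonneg_left hlog h.le
    rw [Real.log_inv] at hmul
    have : r * (r⁻¹ - 1) = 1 - r := by field_simp
    rw [this] at hmul
    have hq : 1 - r = q := by linarith
    rw [hq] at hmul
    linarith

lemma neg_mul_log_le {q c : ℝ} (h0 : 0 ≤ q) (hc : 0 < c) :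
    -(q * Real.log q) ≤ -(q * Real.log c) + (c - q) := by
  rcases eq_or_lt_of_le h0 with h | h
  · rw [← h]; simp; linarith
  · have hlog := Real.log_le_sub_one_of_pos (div_pos hc h)
    have hmul := mul_le_mul_of_nonneg_left hlog h.le
    rw [Real.log_div hc.ne' h.ne', mul_sub] at hmul
    have h2 : q * (c / q - 1) = c - q := by field_simp
    rw [h2] at hmul
    linarith

/-- The total information about the coordinates of the `m`-sparse optimum `A*`
accumulated across periods and options is bounded by the sum of the prior binary
entropies, which is at most `m (log(d/m) + 1)`.  Here
`I_t(A*_j; O_t) = I(A*_j; O_t | O_1, …, O_{t-1})` is the mutual information under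
the posterior at time `t`. -/
theorem total_information_bound {Ω S : Type*} [Fintype Ω]
    (μ : Ω → ℝ) (hμ : ∀ ω, 0 ≤ μ ω) (hsum : ∑ ω, μ ω = 1)
    (d m T : ℕ) (hm : 1 ≤ m) (hmd : m ≤ d)
    (Astar : Ω → Fin d → Bool)
    (hsparse : ∀ ω, μ ω ≠ 0 →
      (Finset.univ.filter fun j => Astar ω j = true).card = m)
    (O : Fin T → Ω → S) :
    (∑ t, ∑ j, condMutInfo μ (fun ω => Astar ω j) (O t) (hist O t))
        ≤ ∑ j, binEnt (pr μ fun ω => Astar ω j = true) ∧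
      (∑ j, binEnt (pr μ fun ω => Astar ω j = true))
        ≤ (m : ℝ) * (Real.log ((d : ℝ) / m) + 1) := by
  constructor
  · -- Part 1: chain rule + telescoping
    rw [Finset.sum_comm]
    apply Finset.sum_le_sum
    intro j _
    set X : Ω → Bool := fun ω => Astar ω j with hX
    have hstep : ∀ t : Fin T, condMutInfo μ X (O t) (hist O t)
        = condEnt μ X (histN O (t : ℕ)) - condEnt μ X (histN O ((t : ℕ) + 1)) := by
      intro t
      rw [condMutInfo_eq μ hμ X (O t) (hist O t)]
      congr 1
      exact condEnt_congr μ X _ _ (fun ω ω' => histN_succ_iff O t ω ω')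
    calc ∑ t, condMutInfo μ X (O t) (hist O t)
        = ∑ t : Fin T, (condEnt μ X (histN O (t : ℕ))
            - condEnt μ X (histN O ((t : ℕ) + 1))) :=
          Finset.sum_congr rfl fun t _ => hstep t
      _ = ∑ i ∈ Finset.range T, (condEnt μ X (histN O i)
            - condEnt μ X (histN O (i + 1))) :=
          Fin.sum_univ_eq_sum_range
            (fun i => condEnt μ X (histN O i) - condEnt μ X (histN O (i + 1))) T
      _ = condEnt μ X (histN O 0) - condEnt μ X (histN O T) :=
          Finset.sum_range_sub' _ T
      _ ≤ condEnt μ X (histN O 0) := by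
          linarith [condEnt_nonneg hμ X (histN O T)]
      _ = ent μ X :=
          condEnt_const μ hsum X _ (fun _ => none)
            (fun ω => funext fun s => if_neg (Nat.not_lt_zero _))
      _ = binEnt (pr μ fun ω => Astar ω j = true) := ent_bool μ hsum X
  · -- Part 2: Jensen-type bound
    set q : Fin d → ℝ := fun j => pr μ (fun ω => Astar ω j = true) with hqdef
    have hq0 : ∀ j, 0 ≤ q j := fun j => pr_nonneg hμ _
    have hq1 : ∀ j, q j ≤ 1 := fun j => le_trans (pr_le_total hμ _) hsum.le
    have hd : (0 : ℝ) < d := by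
      have : (1 : ℕ) ≤ d := le_trans hm hmd
      exact_mod_cast Nat.lt_of_lt_of_le Nat.zero_lt_one this
    have hm' : (0 : ℝ) < m := by exact_mod_cast hm
    have hc : (0 : ℝ) < (m : ℝ) / d := div_pos hm' hd
    have hq_sum : ∑ j : Fin d, q j = m := by
      have hω : ∀ ω : Ω, (∑ j : Fin d,
            @ite ℝ (Astar ω j = true) (Classical.propDecidable _) (μ ω) 0)
          = (m : ℝ) * μ ω := by
        intro ω
        have inst_eq : ∀ j : Fin d,
            @ite ℝ (Astar ω j = true) (Classical.propDecidable _) (μ ω) 0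
              = if Astar ω j = true then μ ω else 0 :=
          fun j => by congr
        rw [Finset.sum_congr rfl fun j _ => inst_eq j]
        by_cases h0 : μ ω = 0
        · simp [h0]
        · rw [← Finset.sum_filter, Finset.sum_const, hsparse ω h0, nsmul_eq_mul]
      simp only [hqdef, pr]
      rw [Finset.sum_comm]
      refine Eq.trans (Finset.sum_congr rfl fun ω _ => hω ω) ?_
      rw [← Finset.mul_sum, hsum, mul_one]
    calc ∑ j, binEnt (q j)
        ≤ ∑ j, (-(q j * Real.log (q j)) + q j) :=
          Finset.sum_le_sum fun j _ => binEnt_le_add (hq1 j)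
      _ ≤ ∑ j, ((-(q j * Real.log ((m : ℝ) / d)) + ((m : ℝ) / d - q j)) + q j) :=
          Finset.sum_le_sum fun j _ =>
            add_le_add_left (neg_mul_log_le (hq0 j) hc) _
      _ = ∑ j, (-(Real.log ((m : ℝ) / d)) * q j + (m : ℝ) / d) :=
          Finset.sum_congr rfl fun j _ => by ring
      _ = -(Real.log ((m : ℝ) / d)) * (m : ℝ) + (d : ℝ) * ((m : ℝ) / d) := by
          rw [Finset.sum_add_distrib, ← Finset.mul_sum, hq_sum, Finset.sum_const,
            Finset.card_univ, Fintype.card_fin, nsmul_eq_mul]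
      _ = (m : ℝ) * (Real.log ((d : ℝ) / m) + 1) := by
          rw [show Real.log ((m : ℝ) / d) = -Real.log ((d : ℝ) / m) by
            rw [← Real.log_inv, inv_div]]
          field_simp
end

section
/- In the Thompson sampling setting, for each period t, the one-period expected regret satisfies E_t[⟨A*, θ⟩ - ⟨A_t, θ⟩] ≤ sqrt( (d/2) · ∑_{j=1}^d (q_{j,t})^2 · KL( E_t[θ_j | A*_j = 1], E_t[θ_j] ) ), where q_{j,t} = P_t(A*_j = 1) and KL is Bernoulli KL divergence. -/
attribute [local instance] Classical.propDecidable

/-- Bernoulli Kullback–Leibler divergence. -/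
noncomputable def klBer (p q : ℝ) : ℝ :=
  p * Real.log (p / q) + (1 - p) * Real.log ((1 - p) / (1 - q))

/-- Reward of action `a` under parameter `v`: the inner product `⟨a, v⟩`. -/
noncomputable def reward {d : ℕ} (a : Fin d → Bool) (v : Fin d → ℝ) : ℝ :=
  ∑ j, if a j then v j else 0

/-! ### Auxiliary lemmas towards Pinsker's inequality for Bernoulli distributions -/

/-- `klBer x r - 2(x-r)^2`, written with log differences. -/
noncomputable def auxFa (r x : ℝ) : ℝ :=
  x * (Real.log x - Real.log r) + (1 - x) * (Real.log (1-x) - Real.log (1-r)) - 2*(x-r)^2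

/-- The derivative of `auxFa r`. -/
noncomputable def auxGa (r x : ℝ) : ℝ :=
  Real.log x - Real.log (1-x) - (Real.log r - Real.log (1-r)) - 4*(x-r)

lemma hasDerivAt_auxGa (r : ℝ) {x : ℝ} (hx : x ∈ Set.Ioo (0:ℝ) 1) :
    HasDerivAt (auxGa r) (1/x + 1/(1-x) - 4) x := by
  obtain ⟨h0, h1⟩ := hx
  have hx1 : (1:ℝ) - x ≠ 0 := by linarith
  have d1 : HasDerivAt (fun x : ℝ => Real.log x) (1/x) x := by
    simpa [one_div] using Real.hasDerivAt_log h0.ne'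
  have d2 : HasDerivAt (fun x : ℝ => Real.log (1-x)) (-(1/(1-x))) x := by
    have h : HasDerivAt (fun x : ℝ => (1:ℝ) - x) (-1) x := by
      simpa using (hasDerivAt_const x (1:ℝ)).fun_sub (hasDerivAt_id' x)
    have := (Real.hasDerivAt_log hx1).comp x h
    simpa [div_eq_mul_inv, one_div, Function.comp_def] using this
  have d3 : HasDerivAt (fun x : ℝ => 4*(x-r)) 4 x := by
    simpa using ((hasDerivAt_id x).sub_const r).const_mul (4:ℝ)
  have := ((d1.fun_sub d2).sub_const (Real.log r - Real.log (1-r))).fun_sub d3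
  refine this.congr_deriv ?_
  ring

lemma hasDerivAt_auxFa (r : ℝ) {x : ℝ} (hx : x ∈ Set.Ioo (0:ℝ) 1) :
    HasDerivAt (auxFa r) (auxGa r x) x := by
  obtain ⟨h0, h1⟩ := hx
  have hx1 : (1:ℝ) - x ≠ 0 := by linarith
  have dlog : HasDerivAt (fun x : ℝ => Real.log x - Real.log r) (1/x) x := by
    simpa [one_div] using (Real.hasDerivAt_log h0.ne').sub_const (Real.log r)
  have d1 : HasDerivAt (fun x : ℝ => x * (Real.log x - Real.log r))
      (1 * (Real.log x - Real.log r) + x * (1/x)) x := (hasDerivAt_id x).mul dlog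
  have done : HasDerivAt (fun x : ℝ => (1:ℝ) - x) (-1) x := by
    simpa using (hasDerivAt_const x (1:ℝ)).fun_sub (hasDerivAt_id' x)
  have dlog2 : HasDerivAt (fun x : ℝ => Real.log (1-x) - Real.log (1-r)) (-(1/(1-x))) x := by
    have := ((Real.hasDerivAt_log hx1).comp x done).sub_const (Real.log (1-r))
    simpa [div_eq_mul_inv, one_div] using this
  have d2 : HasDerivAt (fun x : ℝ => (1-x) * (Real.log (1-x) - Real.log (1-r)))
      ((-1) * (Real.log (1-x) - Real.log (1-r)) + (1-x) * (-(1/(1-x)))) x :=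
    done.mul dlog2
  have d3 : HasDerivAt (fun x : ℝ => 2*(x-r)^2) (2*(2*(x-r))) x := by
    simpa using (((hasDerivAt_id x).sub_const r).pow 2).const_mul (2:ℝ)
  have := (d1.fun_add d2).fun_sub d3
  refine this.congr_deriv ?_
  have e1 : x * (1/x) = 1 := by field_simp
  have e2 : (1-x) * (-(1/(1-x))) = -1 := by field_simp
  rw [auxGa, e1, e2]
  ring

lemma auxGa_self (r : ℝ) : auxGa r r = 0 := by simp [auxGa]

lemma auxFa_self (r : ℝ) : auxFa r r = 0 := by simp [auxFa]

lemma auxGa_mono (r : ℝ) : MonotoneOn (auxGa r) (Set.Ioo (0:ℝ) 1) := by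
  have hint : interior (Set.Ioo (0:ℝ) 1) = Set.Ioo (0:ℝ) 1 := interior_Ioo
  apply monotoneOn_of_deriv_nonneg (convex_Ioo 0 1)
  · intro x hx
    exact (hasDerivAt_auxGa r hx).differentiableAt.continuousAt.continuousWithinAt
  · rw [hint]
    intro x hx
    exact (hasDerivAt_auxGa r hx).differentiableAt.differentiableWithinAt
  · rw [hint]
    intro x hx
    rw [(hasDerivAt_auxGa r hx).deriv]
    obtain ⟨h0, h1⟩ := hx
    have hx1 : (0:ℝ) < 1 - x := by linarith
    rw [div_add_div _ _ h0.ne' hx1.ne', sub_nonneg, le_div_iff₀ (by positivity)]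
    nlinarith [sq_nonneg (2*x - 1)]

lemma auxFa_nonneg {p r : ℝ} (hp : p ∈ Set.Ioo (0:ℝ) 1) (hr : r ∈ Set.Ioo (0:ℝ) 1) :
    0 ≤ auxFa r p := by
  rcases le_or_gt r p with h | h
  · have hsub : Set.Icc r p ⊆ Set.Ioo (0:ℝ) 1 := fun x hx =>
      ⟨lt_of_lt_of_le hr.1 hx.1, lt_of_le_of_lt hx.2 hp.2⟩
    have hmono : MonotoneOn (auxFa r) (Set.Icc r p) := by
      apply monotoneOn_of_deriv_nonneg (convex_Icc r p)
      · intro x hx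
        exact (hasDerivAt_auxFa r (hsub hx)).differentiableAt.continuousAt.continuousWithinAt
      · intro x hx
        exact (hasDerivAt_auxFa r (hsub (interior_subset hx))).differentiableAt.differentiableWithinAt
      · intro x hx
        rw [interior_Icc] at hx
        have hx' : x ∈ Set.Ioo (0:ℝ) 1 := hsub ⟨hx.1.le, hx.2.le⟩
        rw [(hasDerivAt_auxFa r hx').deriv]
        have := auxGa_mono r hr hx' hx.1.le
        rwa [auxGa_self] at this
    have := hmono (Set.left_mem_Icc.mpr h) (Set.right_mem_Icc.mpr h) h
    rwa [auxFa_self] at this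
  · have hsub : Set.Icc p r ⊆ Set.Ioo (0:ℝ) 1 := fun x hx =>
      ⟨lt_of_lt_of_le hp.1 hx.1, lt_of_le_of_lt hx.2 hr.2⟩
    have hmono : AntitoneOn (auxFa r) (Set.Icc p r) := by
      apply antitoneOn_of_deriv_nonpos (convex_Icc p r)
      · intro x hx
        exact (hasDerivAt_auxFa r (hsub hx)).differentiableAt.continuousAt.continuousWithinAt
      · intro x hx
        exact (hasDerivAt_auxFa r (hsub (interior_subset hx))).differentiableAt.differentiableWithinAt
      · intro x hx
        rw [interior_Icc] at hx
        have hx' : x ∈ Set.Ioo (0:ℝ) 1 := hsub ⟨hx.1.le, hx.2.le⟩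
        rw [(hasDerivAt_auxFa r hx').deriv]
        have := auxGa_mono r hx' hr hx.2.le
        rwa [auxGa_self] at this
    have := hmono (Set.left_mem_Icc.mpr h.le) (Set.right_mem_Icc.mpr h.le) h.le
    rwa [auxFa_self] at this

/-- Pinsker's inequality for Bernoulli distributions. -/
lemma pinsker_bernoulli {p r : ℝ} (hp : p ∈ Set.Ioo (0:ℝ) 1) (hr : r ∈ Set.Ioo (0:ℝ) 1) :
    2*(p - r)^2 ≤ klBer p r := by
  have h := auxFa_nonneg hp hr
  have e : klBer p r = auxFa r p + 2*(p-r)^2 := by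
    rw [klBer, auxFa, Real.log_div hp.1.ne' hr.1.ne',
      Real.log_div (by linarith [hp.2] : (1:ℝ) - p ≠ 0) (by linarith [hr.2] : (1:ℝ) - r ≠ 0)]
    ring
  linarith

/-! ### Combinatorial lemmas about `pr` -/

lemma ite_iff {α : Sort*} {c1 c2 : Prop} {h1 : Decidable c1} {h2 : Decidable c2}
    (h : c1 ↔ c2) (a b : α) : @ite _ c1 h1 a b = @ite _ c2 h2 a b := by
  by_cases hc : c1
  · rw [if_pos hc, if_pos (h.mp hc)]
  · rw [if_neg hc, if_neg (fun hx => hc (h.mpr hx))]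

lemma sum_ind_eq {Ω : Type*} [Fintype Ω] (μ : Ω → ℝ) {d : ℕ} (B : Ω → Fin d → Bool) (j : Fin d) :
    (∑ a : Fin d → Bool, if a j = true then pr μ (fun ω => B ω = a) else 0)
      = pr μ (fun ω => B ω j = true) := by
  classical
  have step1 : ∀ a : Fin d → Bool,
      (if a j = true then pr μ (fun ω => B ω = a) else 0)
        = ∑ ω, if B ω = a ∧ a j = true then μ ω else 0 := by
    intro a
    by_cases h : a j = true
    · rw [if_pos h, pr]
      exact Finset.sum_congr rfl fun ω _ => ite_iff (by simp [h]) _ _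
    · rw [if_neg h]
      exact (Finset.sum_eq_zero fun ω _ =>
        if_neg (fun hc : B ω = a ∧ a j = true => h hc.2)).symm
  rw [Finset.sum_congr rfl (fun a _ => step1 a), Finset.sum_comm, pr]
  refine Finset.sum_congr rfl (fun ω _ => ?_)
  rw [Finset.sum_eq_single (B ω)]
  · exact ite_iff (by simp) _ _
  · intro a _ ha
    exact if_neg (fun hc : B ω = a ∧ a j = true => ha hc.1.symm)
  · intro h
    exact absurd (Finset.mem_univ _) h

lemma indep_term {Ω : Type*} [Fintype Ω] (μ : Ω → ℝ) {d : ℕ}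
    (θ : Ω → Fin d → ℝ) (At : Ω → Fin d → Bool)
    (hind : ∀ (a : Fin d → Bool) (v : Fin d → ℝ),
      pr μ (fun ω => At ω = a ∧ θ ω = v)
        = pr μ (fun ω => At ω = a) * pr μ (fun ω => θ ω = v)) (j : Fin d) :
    ∑ ω, (if At ω j = true then μ ω * θ ω j else 0)
      = (∑ a : Fin d → Bool, if a j = true then pr μ (fun ω => At ω = a) else 0)
        * (∑ ω, μ ω * θ ω j) := by
  classical
  set V : Finset (Fin d → ℝ) := Finset.univ.image θ with hV
  have step1 : ∀ ω, (if At ω j = true then μ ω * θ ω j else 0)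
      = ∑ a : Fin d → Bool, ∑ v ∈ V, (if a j = true then v j else 0)
          * (if At ω = a ∧ θ ω = v then μ ω else 0) := by
    intro ω
    have inner : ∀ a : Fin d → Bool,
        (∑ v ∈ V, (if a j = true then v j else 0) * (if At ω = a ∧ θ ω = v then μ ω else 0))
          = (if a j = true then θ ω j else 0) * (if At ω = a then μ ω else 0) := by
      intro a
      rw [Finset.sum_eq_single_of_mem (θ ω) (Finset.mem_image_of_mem θ (Finset.mem_univ ω))]
      · congr 1
        exact ite_iff (by simp) _ _
      · intro v _ hv
        rw [if_neg (fun hc : At ω = a ∧ θ ω = v => hv hc.2.symm), mul_zero]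
    rw [Finset.sum_congr rfl (fun a _ => inner a), Finset.sum_eq_single (At ω)]
    · rw [if_pos rfl]
      cases h : At ω j
      · rw [if_neg (by simp [h]), if_neg (by simp [h]), zero_mul]
      · rw [if_pos (by simp [h]), if_pos (by simp [h]), mul_comm]
    · intro a _ ha
      rw [if_neg (fun hc : At ω = a => ha hc.symm), mul_zero]
    · intro h
      exact absurd (Finset.mem_univ _) h
  rw [Finset.sum_congr rfl (fun ω _ => step1 ω), Finset.sum_comm]
  have step2 : ∀ a : Fin d → Bool,
      (∑ ω, ∑ v ∈ V, (if a j = true then v j else 0)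
          * (if At ω = a ∧ θ ω = v then μ ω else 0))
      = ∑ v ∈ V, (if a j = true then v j else 0) * pr μ (fun ω => At ω = a ∧ θ ω = v) := by
    intro a
    rw [Finset.sum_comm]
    refine Finset.sum_congr rfl fun v _ => ?_
    rw [pr, Finset.mul_sum]
    exact Finset.sum_congr rfl fun ω _ => by rw [ite_iff Iff.rfl (μ ω) 0]
  rw [Finset.sum_congr rfl (fun a _ => step2 a)]
  have step3 : ∀ (a : Fin d → Bool) (v : Fin d → ℝ),
      (if a j = true then v j else 0) * pr μ (fun ω => At ω = a ∧ θ ω = v)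
      = (if a j = true then pr μ (fun ω => At ω = a) else 0)
          * (v j * pr μ (fun ω => θ ω = v)) := by
    intro a v
    rw [hind a v]
    by_cases h : a j = true
    · rw [if_pos h, if_pos h]; ring
    · rw [if_neg h, if_neg h, zero_mul, zero_mul]
  calc ∑ a : Fin d → Bool, ∑ v ∈ V,
          (if a j = true then v j else 0) * pr μ (fun ω => At ω = a ∧ θ ω = v)
      = ∑ a : Fin d → Bool, ∑ v ∈ V,
          (if a j = true then pr μ (fun ω => At ω = a) else 0)
            * (v j * pr μ (fun ω => θ ω = v)) :=
        Finset.sum_congr rfl fun a _ => Finset.sum_congr rfl fun v _ => step3 a v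
    _ = (∑ a : Fin d → Bool, if a j = true then pr μ (fun ω => At ω = a) else 0)
          * (∑ v ∈ V, v j * pr μ (fun ω => θ ω = v)) := by
        rw [Finset.sum_mul_sum]
    _ = (∑ a : Fin d → Bool, if a j = true then pr μ (fun ω => At ω = a) else 0)
          * (∑ ω, μ ω * θ ω j) := by
        congr 1
        have expand : ∀ v ∈ V, v j * pr μ (fun ω => θ ω = v)
            = ∑ ω, (if θ ω = v then v j * μ ω else 0) := by
          intro v _
          rw [pr, Finset.mul_sum]
          refine Finset.sum_congr rfl fun ω _ => ?_
          by_cases h : θ ω = v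
          · rw [if_pos h, if_pos h]
          · rw [if_neg h, if_neg h, mul_zero]
        rw [Finset.sum_congr rfl expand, Finset.sum_comm]
        refine Finset.sum_congr rfl fun ω _ => ?_
        rw [Finset.sum_eq_single_of_mem (θ ω) (Finset.mem_image_of_mem θ (Finset.mem_univ ω))]
        · rw [if_pos rfl, mul_comm]
        · intro v _ hv
          exact if_neg (fun h : θ ω = v => hv h.symm)

/-- Lemma 1: one-period expected regret of Thompson sampling is bounded by the
component-wise information term.  The sample space `Ω` with weights `μ` represents
the posterior `P_t` at period `t`. -/
theorem one_period_regret_bound {Ω : Type*} [Fintype Ω]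
    (μ : Ω → ℝ) (hμ : ∀ ω, 0 ≤ μ ω) (hsum : ∑ ω, μ ω = 1)
    (d m : ℕ) (hm : 1 ≤ m) (hmd : m ≤ d)
    (Acts : Finset (Fin d → Bool)) (hne : Acts.Nonempty)
    (hsparse : ∀ a ∈ Acts, (Finset.univ.filter fun j => a j = true).card = m)
    (θ : Ω → Fin d → ℝ) (hθ : ∀ ω j, θ ω j ∈ Set.Ioo (0:ℝ) 1)
    (Astar At : Ω → Fin d → Bool)
    -- `A*` maximizes `⟨a, θ⟩` over the feasible set, almost surely:
    (hopt : ∀ ω, μ ω ≠ 0 →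
      Astar ω ∈ Acts ∧ ∀ a ∈ Acts, reward a (θ ω) ≤ reward (Astar ω) (θ ω))
    -- Thompson sampling: `A_t` has the posterior distribution of `A*`:
    (hthom : ∀ a : Fin d → Bool,
      pr μ (fun ω => At ω = a) = pr μ (fun ω => Astar ω = a))
    -- `A_t` is drawn independently of `θ`:
    (hind : ∀ (a : Fin d → Bool) (v : Fin d → ℝ),
      pr μ (fun ω => At ω = a ∧ θ ω = v)
        = pr μ (fun ω => At ω = a) * pr μ (fun ω => θ ω = v)) :
    ∑ ω, μ ω * (reward (Astar ω) (θ ω) - reward (At ω) (θ ω))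
      ≤ Real.sqrt (((d : ℝ) / 2) *
          ∑ j, (pr μ fun ω => Astar ω j = true) ^ 2 *
            klBer ((∑ ω, if Astar ω j = true then μ ω * θ ω j else 0) /
                (pr μ fun ω => Astar ω j = true))
              (∑ ω, μ ω * θ ω j)) := by
  classical
  set q : Fin d → ℝ := fun j => pr μ (fun ω => Astar ω j = true) with hq
  set num : Fin d → ℝ := fun j => ∑ ω, if Astar ω j = true then μ ω * θ ω j else 0 with hnum
  set r : Fin d → ℝ := fun j => ∑ ω, μ ω * θ ω j with hrdef
  -- there is a state of positive weight
  obtain ⟨ω₀, hω₀⟩ : ∃ ω, 0 < μ ω := by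
    by_contra hcon
    push_neg at hcon
    have : ∑ ω, μ ω = 0 := Finset.sum_eq_zero fun ω _ => le_antisymm (hcon ω) (hμ ω)
    rw [hsum] at this; norm_num at this
  have hq_eq : ∀ jj : Fin d, q jj = ∑ ω, (if Astar ω jj = true then μ ω else 0 : ℝ) :=
    fun jj => Finset.sum_congr rfl fun ω _ => ite_iff Iff.rfl _ _
  -- bounds on r
  have hr01 : ∀ j, r j ∈ Set.Ioo (0:ℝ) 1 := by
    intro j
    constructor
    · refine Finset.sum_pos' (fun ω _ => mul_nonneg (hμ ω) (hθ ω j).1.le) ⟨ω₀, Finset.mem_univ _, ?_⟩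
      exact mul_pos hω₀ (hθ ω₀ j).1
    · calc r j < ∑ ω, μ ω := by
            refine Finset.sum_lt_sum (fun ω _ => ?_) ⟨ω₀, Finset.mem_univ _, ?_⟩
            · rcases eq_or_lt_of_le (hμ ω) with h | h
              · rw [← h]; simp
              · nlinarith [(hθ ω j).2]
            · nlinarith [(hθ ω₀ j).2]
        _ = 1 := hsum
  -- q is nonnegative
  have hq0 : ∀ j, 0 ≤ q j := by
    intro j
    rw [hq_eq j]
    exact Finset.sum_nonneg fun ω _ => by split <;> [exact hμ ω; exact le_rfl]
  -- if q j = 0 then num j = 0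
  have hnum0 : ∀ j, q j = 0 → num j = 0 := by
    intro j hqj
    rw [hq_eq j] at hqj
    have hall := (Finset.sum_eq_zero_iff_of_nonneg
      (fun ω _ => by split <;> [exact hμ ω; exact le_rfl])).mp hqj
    refine Finset.sum_eq_zero fun ω _ => ?_
    by_cases h : Astar ω j = true
    · have := hall ω (Finset.mem_univ ω)
      rw [if_pos h] at this
      rw [if_pos h, this, zero_mul]
    · rw [if_neg h]
  -- if q j > 0 then num j / q j ∈ (0,1)
  have hp01 : ∀ j, 0 < q j → num j / q j ∈ Set.Ioo (0:ℝ) 1 := by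
    intro j hqj
    obtain ⟨ω₁, -, hω₁⟩ :
        ∃ ω ∈ Finset.univ, 0 < (if Astar ω j = true then μ ω else (0:ℝ)) := by
      by_contra hcon
      push_neg at hcon
      have : q j ≤ 0 := by
        rw [hq_eq j]
        exact Finset.sum_nonpos fun ω hω => hcon ω hω
      linarith
    have hA1 : Astar ω₁ j = true := by
      by_contra h
      rw [if_neg h] at hω₁; exact lt_irrefl _ hω₁
    rw [if_pos hA1] at hω₁
    have hnumpos : 0 < num j := by
      refine Finset.sum_pos' (fun ω _ => ?_) ⟨ω₁, Finset.mem_univ _, ?_⟩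
      · split
        · exact mul_nonneg (hμ ω) (hθ ω j).1.le
        · exact le_rfl
      · rw [if_pos hA1]
        exact mul_pos hω₁ (hθ ω₁ j).1
    have hnumlt : num j < q j := by
      rw [← sub_pos, hq_eq j]
      have hnumexp : num j = ∑ ω, (if Astar ω j = true then μ ω * θ ω j else 0 : ℝ) := rfl
      rw [hnumexp, ← Finset.sum_sub_distrib]
      refine Finset.sum_pos' (fun ω _ => ?_) ⟨ω₁, Finset.mem_univ _, ?_⟩
      · by_cases h : Astar ω j = true
        · rw [if_pos h, if_pos h]
          nlinarith [(hθ ω j).2, hμ ω]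
        · rw [if_neg h, if_neg h]; simp
      · rw [if_pos hA1, if_pos hA1]
        nlinarith [(hθ ω₁ j).2]
    exact ⟨div_pos hnumpos hqj, (div_lt_one hqj).mpr hnumlt⟩
  -- Step 1: the regret decomposes componentwise
  have hLHS : ∑ ω, μ ω * (reward (Astar ω) (θ ω) - reward (At ω) (θ ω))
      = ∑ j, (num j - q j * r j) := by
    have expand : ∀ ω, μ ω * (reward (Astar ω) (θ ω) - reward (At ω) (θ ω))
        = (∑ j, if Astar ω j = true then μ ω * θ ω j else 0)
          - (∑ j, if At ω j = true then μ ω * θ ω j else 0) := by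
      intro ω
      rw [reward, reward, mul_sub, Finset.mul_sum, Finset.mul_sum]
      congr 1
      · refine Finset.sum_congr rfl fun j _ => ?_
        by_cases h : Astar ω j = true
        · rw [if_pos h, if_pos h]
        · rw [if_neg h, if_neg h, mul_zero]
      · refine Finset.sum_congr rfl fun j _ => ?_
        by_cases h : At ω j = true
        · rw [if_pos h, if_pos h]
        · rw [if_neg h, if_neg h, mul_zero]
    calc ∑ ω, μ ω * (reward (Astar ω) (θ ω) - reward (At ω) (θ ω))
        = ∑ ω, ((∑ j, if Astar ω j = true then μ ω * θ ω j else 0)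
            - (∑ j, if At ω j = true then μ ω * θ ω j else 0)) :=
          Finset.sum_congr rfl fun ω _ => expand ω
      _ = (∑ ω, ∑ j, if Astar ω j = true then μ ω * θ ω j else 0)
            - (∑ ω, ∑ j, if At ω j = true then μ ω * θ ω j else 0) :=
          Finset.sum_sub_distrib _ _
      _ = (∑ j, ∑ ω, if Astar ω j = true then μ ω * θ ω j else 0)
            - (∑ j, ∑ ω, if At ω j = true then μ ω * θ ω j else 0) := by
          congr 1 <;> exact Finset.sum_comm
      _ = ∑ j, ((∑ ω, if Astar ω j = true then μ ω * θ ω j else 0)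
            - (∑ ω, if At ω j = true then μ ω * θ ω j else 0)) :=
          (Finset.sum_sub_distrib _ _).symm
      _ = ∑ j, (num j - q j * r j) := by
          refine Finset.sum_congr rfl fun j _ => ?_
          congr 1
          rw [indep_term μ θ At hind j,
            Finset.sum_congr rfl fun (a : Fin d → Bool) _ => by rw [hthom a],
            sum_ind_eq μ Astar j]
  rw [hLHS]
  -- Step 2: rewrite each summand using the conditional mean
  have hterm : ∀ j, num j - q j * r j = q j * (num j / q j - r j) := by
    intro j
    rcases eq_or_lt_of_le (hq0 j) with h | h
    · rw [← h, hnum0 j h.symm]; ring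
    · field_simp
  rw [Finset.sum_congr rfl fun j _ => hterm j]
  -- Step 3: Cauchy–Schwarz then Pinsker
  have CS : (∑ j, q j * (num j / q j - r j)) ^ 2
      ≤ (d : ℝ) * ∑ j, (q j * (num j / q j - r j)) ^ 2 := by
    have := sq_sum_le_card_mul_sum_sq (s := Finset.univ)
      (f := fun j : Fin d => q j * (num j / q j - r j))
    simpa using this
  have hPins : ∀ j, (q j * (num j / q j - r j)) ^ 2
      ≤ q j ^ 2 * (klBer (num j / q j) (r j) / 2) := by
    intro j
    rcases eq_or_lt_of_le (hq0 j) with h | h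
    · rw [← h]; ring_nf; simp
    · have hkl := pinsker_bernoulli (hp01 j h) (hr01 j)
      have : (num j / q j - r j) ^ 2 ≤ klBer (num j / q j) (r j) / 2 := by linarith
      calc (q j * (num j / q j - r j)) ^ 2
          = q j ^ 2 * (num j / q j - r j) ^ 2 := by ring
        _ ≤ q j ^ 2 * (klBer (num j / q j) (r j) / 2) :=
            mul_le_mul_of_nonneg_left this (sq_nonneg _)
  have key : (∑ j, q j * (num j / q j - r j)) ^ 2
      ≤ ((d : ℝ) / 2) * ∑ j, q j ^ 2 * klBer (num j / q j) (r j) := by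
    calc (∑ j, q j * (num j / q j - r j)) ^ 2
        ≤ (d : ℝ) * ∑ j, (q j * (num j / q j - r j)) ^ 2 := CS
      _ ≤ (d : ℝ) * ∑ j, q j ^ 2 * (klBer (num j / q j) (r j) / 2) := by
          apply mul_le_mul_of_nonneg_left _ (Nat.cast_nonneg d)
          exact Finset.sum_le_sum fun j _ => hPins j
      _ = ((d : ℝ) / 2) * ∑ j, q j ^ 2 * klBer (num j / q j) (r j) := by
          rw [Finset.mul_sum, Finset.mul_sum]
          exact Finset.sum_congr rfl fun j _ => by ring
  calc ∑ j, q j * (num j / q j - r j)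
      ≤ |∑ j, q j * (num j / q j - r j)| := le_abs_self _
    _ = Real.sqrt ((∑ j, q j * (num j / q j - r j)) ^ 2) := (Real.sqrt_sq_eq_abs _).symm
    _ ≤ Real.sqrt (((d : ℝ) / 2) * ∑ j, q j ^ 2 * klBer (num j / q j) (r j)) :=
        Real.sqrt_le_sqrt key
end
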